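/- Let p and q be distinct primes with pq dividing the positive integer n, and let d be a divisor of n. Then the number of cyclic subgroups of Z_{pq} × Z_n of order d equals: 1, if gcd(d, pq) = 1; p + 1, if p ∣ d, p² ∤ d and q ∤ d; p, if p² ∣ d and q ∤ d; q + 1, if q ∣ d, q² ∤ d and p ∤ d; q, if q² ∣ d and p ∤ d; pq + p + q + 1, if pq ∣ d, p² ∤ d and q² ∤ d; pq + p, if p² ∣ d, q ∣ d and q² ∤ d; pq + q, if q² ∣ d, p ∣ d and p² ∤ d; and pq, if p²q² ∣ d. -/

import Mathlib

open Polynomial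

/-- The power graph of an additive group `G`: distinct vertices `x` and `y` are adjacent
iff one is an (integral) multiple of the other, i.e. `x ∈ ⟨y⟩` or `y ∈ ⟨x⟩`. -/
def addPowerGraph (G : Type*) [AddGroup G] : SimpleGraph G where
  Adj x y := x ≠ y ∧ (x ∈ AddSubgroup.zmultiples y ∨ y ∈ AddSubgroup.zmultiples x)
  symm := by
    constructor
    intro x y h
    exact ⟨h.1.symm, h.2.symm⟩
  loopless := by
    constructor
    intro x h
    exact h.1 rfl

open Classical in
/-- The adjacency matrix (over `ℤ`) of a finite simple graph. -/
noncomputable def adjMat {V : Type*} [Fintype V] (G : SimpleGraph V) : Matrix V V ℤ :=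
  fun i j => if G.Adj i j then 1 else 0

/-- The number of cyclic subgroups of order `d` of an additive group `G`. -/
noncomputable def numCyclicSubgroups (G : Type*) [AddGroup G] (d : ℕ) : ℕ :=
  Nat.card {H : AddSubgroup G // IsAddCyclic H ∧ Nat.card H = d}

section Aux

open AddSubgroup Finset

lemma isAddCyclic_zmultiples {G : Type*} [AddGroup G] (x : G) :
    IsAddCyclic (zmultiples x) := by
  refine ⟨⟨x, mem_zmultiples x⟩, ?_⟩
  rintro ⟨y, k, rfl⟩
  exact ⟨k, by ext; simp⟩

open Classical in
lemma count_key (G : Type*) [AddGroup G] [Fintype G] (d : ℕ) :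
    numCyclicSubgroups G d * Nat.totient d
      = (univ.filter (fun x : G => addOrderOf x = d)).card := by
  classical
  set T : Finset (AddSubgroup G) :=
    univ.filter (fun H : AddSubgroup G => IsAddCyclic H ∧ Nat.card H = d) with hT
  have h1 : numCyclicSubgroups G d = T.card := by
    rw [numCyclicSubgroups, Nat.card_eq_fintype_card, Fintype.card_subtype, hT]
  have hmem : ∀ x ∈ univ.filter (fun x : G => addOrderOf x = d),
      zmultiples x ∈ T := by
    intro x hx
    rw [mem_filter] at hx
    rw [hT, mem_filter]
    exact ⟨mem_univ _, _root_.isAddCyclic_zmultiples x, by rw [Nat.card_zmultiples, hx.2]⟩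
  rw [Finset.card_eq_sum_card_fiberwise hmem]
  have hfib : ∀ H ∈ T,
      ((univ.filter (fun x : G => addOrderOf x = d)).filter
        (fun x => zmultiples x = H)).card = Nat.totient d := by
    intro H hH
    rw [hT, mem_filter] at hH
    obtain ⟨-, hcyc, hcard⟩ := hH
    have hset : ((univ.filter (fun x : G => addOrderOf x = d)).filter
        (fun x => zmultiples x = H))
        = univ.filter (fun x : G => addOrderOf x = d ∧ x ∈ H) := by
      ext x
      simp only [mem_filter, mem_univ, true_and]
      constructor
      · rintro ⟨h1, rfl⟩
        exact ⟨h1, mem_zmultiples x⟩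
      · rintro ⟨h1, h2⟩
        refine ⟨h1, ?_⟩
        apply AddSubgroup.eq_of_le_of_card_ge
        · rwa [zmultiples_le]
        · rw [hcard, Nat.card_zmultiples, h1]
    rw [hset]
    have hcyc' : IsAddCyclic H := hcyc
    have hd' : d ∣ Fintype.card H := by
      rw [← Nat.card_eq_fintype_card, hcard]
    have := IsAddCyclic.card_addOrderOf_eq_totient (α := H) hd'
    rw [← this]
    apply Finset.card_bij (fun (x : G) hx => (⟨x, (mem_filter.mp hx).2.2⟩ : H))
    · intro x hx
      simp only [mem_filter, mem_univ, true_and] at hx ⊢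
      rw [AddSubgroup.addOrderOf_mk]
      exact hx.1
    · intro x hx y hy hxy
      simpa using congrArg Subtype.val hxy
    · intro y hy
      simp only [mem_filter, mem_univ, true_and] at hy
      exact ⟨(y : G), by
        simp only [mem_filter, mem_univ, true_and]
        exact ⟨by rw [AddSubgroup.addOrderOf_coe]; exact hy, y.2⟩, rfl⟩
  rw [Finset.sum_congr rfl hfib, Finset.sum_const, smul_eq_mul, h1]


lemma addOrderOf_zmod_dvd {M : ℕ} [NeZero M] (x : ZMod M) : addOrderOf x ∣ M := by
  have h : addOrderOf x ∣ Fintype.card (ZMod M) := addOrderOf_dvd_card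
  rwa [ZMod.card] at h

lemma card_addOrderOf_zmod (M e : ℕ) [NeZero M] :
    (univ.filter fun x : ZMod M => addOrderOf x = e).card
      = if e ∣ M then e.totient else 0 := by
  split_ifs with h
  · have : e ∣ Fintype.card (ZMod M) := by rwa [ZMod.card]
    exact IsAddCyclic.card_addOrderOf_eq_totient this
  · rw [Finset.card_eq_zero, Finset.filter_eq_empty_iff]
    intro x _
    intro hx
    exact h (hx ▸ addOrderOf_zmod_dvd x)

lemma sum_over_orders (M : ℕ) [NeZero M] (g : ℕ → ℕ) :
    ∑ x : ZMod M, g (addOrderOf x) = ∑ k ∈ M.divisors, k.totient * g k := by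
  classical
  rw [Finset.sum_comp g (fun x : ZMod M => addOrderOf x)]
  have hsub : Finset.image (fun x : ZMod M => addOrderOf x) univ ⊆ M.divisors := by
    intro k hk
    rw [Finset.mem_image] at hk
    obtain ⟨x, -, rfl⟩ := hk
    rw [Nat.mem_divisors]
    exact ⟨addOrderOf_zmod_dvd x, NeZero.ne M⟩
  rw [Finset.sum_subset hsub]
  · apply Finset.sum_congr rfl
    intro k hk
    rw [smul_eq_mul, card_addOrderOf_zmod, if_pos (Nat.mem_divisors.mp hk).1]
  · intro k _ hk
    have h0 : (univ.filter fun x : ZMod M => addOrderOf x = k).card = 0 := by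
      rw [Finset.card_eq_zero, Finset.filter_eq_empty_iff]
      intro x _ hx
      exact hk (Finset.mem_image.mpr ⟨x, mem_univ x, hx⟩)
    rw [h0, zero_smul]



lemma S_eq (a n d : ℕ) [NeZero a] [NeZero n] :
    (univ.filter fun z : ZMod a × ZMod n => addOrderOf z = d).card
      = ∑ e ∈ a.divisors, e.totient *
          ∑ k ∈ n.divisors, (if Nat.lcm e k = d then k.totient else 0) := by
  classical
  rw [Finset.card_filter]
  rw [Fintype.sum_prod_type]
  have h1 : ∀ x : ZMod a, ∀ y : ZMod n,
      (if addOrderOf (x, y) = d then 1 else 0)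
        = (if Nat.lcm (addOrderOf x) (addOrderOf y) = d then 1 else 0) := by
    intro x y
    rw [Prod.addOrderOf_mk]
  simp_rw [h1]
  have h2 : ∀ x : ZMod a,
      (∑ y : ZMod n, if Nat.lcm (addOrderOf x) (addOrderOf y) = d then 1 else 0)
        = ∑ k ∈ n.divisors, k.totient *
            (if Nat.lcm (addOrderOf x) k = d then 1 else 0) := by
    intro x
    exact sum_over_orders n (fun k => if Nat.lcm (addOrderOf x) k = d then 1 else 0)
  simp_rw [h2]
  rw [sum_over_orders a (fun e => ∑ k ∈ n.divisors,
      k.totient * (if Nat.lcm e k = d then 1 else 0))]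
  apply Finset.sum_congr rfl
  intro e _
  congr 1
  apply Finset.sum_congr rfl
  intro k _
  split_ifs <;> simp


lemma lcm_prime_eq {r d : ℕ} (hr : r.Prime) (hrd : r ∣ d) (k : ℕ) :
    Nat.lcm r k = d ↔ (k = d ∨ (¬ r ^ 2 ∣ d ∧ r * k = d)) := by
  constructor
  · intro h
    have hkd : k ∣ d := h ▸ Nat.dvd_lcm_right r k
    by_cases hrk : r ∣ k
    · left
      have : Nat.lcm r k ∣ k := Nat.lcm_dvd hrk dvd_rfl
      exact Nat.dvd_antisymm hkd (h ▸ this)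
    · right
      have hcop : Nat.Coprime r k := (Nat.Prime.coprime_iff_not_dvd hr).mpr hrk
      have hmul : Nat.lcm r k = r * k := Nat.Coprime.lcm_eq_mul hcop
      refine ⟨?_, by rw [← hmul, h]⟩
      intro hr2
      apply hrk
      have : r * r ∣ r * k := by
        rw [← pow_two]
        rw [← hmul, h]
        exact hr2
      exact (Nat.mul_dvd_mul_iff_left hr.pos).mp this
  · rintro (rfl | ⟨h2, hk⟩)
    · exact Nat.dvd_antisymm (Nat.lcm_dvd hrd dvd_rfl) (Nat.dvd_lcm_right r k)
    · have hrk : ¬ r ∣ k := by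
        intro hc
        exact h2 (by rw [pow_two, ← hk]; exact mul_dvd_mul_left r hc)
      rw [Nat.Coprime.lcm_eq_mul ((Nat.Prime.coprime_iff_not_dvd hr).mpr hrk), hk]

lemma lcm_two_primes_eq {p q d : ℕ} (hp : p.Prime) (hq : q.Prime) (hpq : p ≠ q)
    (hpd : p ∣ d) (hqd : q ∣ d) (k : ℕ) :
    Nat.lcm (p * q) k = d ↔
      (k = d ∨ (¬ p ^ 2 ∣ d ∧ p * k = d) ∨ (¬ q ^ 2 ∣ d ∧ q * k = d) ∨
        (¬ p ^ 2 ∣ d ∧ ¬ q ^ 2 ∣ d ∧ p * (q * k) = d)) := by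
  have hcop : Nat.Coprime p q := (Nat.coprime_primes hp hq).mpr hpq
  have hcop2 : Nat.Coprime (q ^ 2) p := (Nat.Coprime.pow_left 2 hcop.symm)
  have hassoc : Nat.lcm (p * q) k = Nat.lcm p (Nat.lcm q k) := by
    rw [← Nat.Coprime.lcm_eq_mul hcop, Nat.lcm_assoc]
  rw [hassoc, lcm_prime_eq hp hpd, lcm_prime_eq hq hqd]
  obtain ⟨d₁, rfl⟩ := hpd
  have hqd₁ : q ∣ d₁ := Nat.Coprime.dvd_of_dvd_mul_left hcop.symm hqd
  have hq2iff : q ^ 2 ∣ p * d₁ ↔ q ^ 2 ∣ d₁ :=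
    ⟨fun h => Nat.Coprime.dvd_of_dvd_mul_left hcop2 h, fun h => h.mul_left p⟩
  have hcancel : ∀ x : ℕ, p * x = p * d₁ ↔ x = d₁ :=
    fun x => ⟨fun h => Nat.eq_of_mul_eq_mul_left hp.pos h, fun h => by rw [h]⟩
  constructor
  · rintro ((rfl | ⟨h2, hk⟩) | ⟨hp2, hlk⟩)
    · exact Or.inl rfl
    · exact Or.inr (Or.inr (Or.inl ⟨h2, hk⟩))
    · have hX : Nat.lcm q k = d₁ := (hcancel _).mp hlk
      rcases (lcm_prime_eq hq hqd₁ k).mp hX with rfl | ⟨hq2, hqk⟩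
      · exact Or.inr (Or.inl ⟨hp2, rfl⟩)
      · exact Or.inr (Or.inr (Or.inr ⟨hp2, fun hc => hq2 (hq2iff.mp hc),
          by rw [hqk]⟩))
  · rintro (rfl | ⟨hp2, hpk⟩ | ⟨hq2, hqk⟩ | ⟨hp2, hq2, hpqk⟩)
    · left; left; rfl
    · right
      refine ⟨hp2, ?_⟩
      rw [hcancel]
      have hk : k = d₁ := (hcancel k).mp hpk
      subst hk
      exact (lcm_prime_eq hq hqd₁ k).mpr (Or.inl rfl)
    · left; right; exact ⟨hq2, hqk⟩
    · right
      refine ⟨hp2, ?_⟩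
      rw [hcancel]
      have hk : q * k = d₁ := (hcancel _).mp hpqk
      exact (lcm_prime_eq hq hqd₁ k).mpr (Or.inr ⟨fun hc => hq2 (hq2iff.mpr hc), hk⟩)

lemma sum_ite_eq_single {s : Finset ℕ} {f : ℕ → ℕ} {a : ℕ} (ha : a ∈ s) :
    ∑ k ∈ s, (if k = a then f k else 0) = f a := by
  rw [Finset.sum_ite_eq' s a f, if_pos ha]

lemma sum_ite_or {s : Finset ℕ} {f : ℕ → ℕ} {a b : ℕ} (hab : a ≠ b)
    (ha : a ∈ s) (hb : b ∈ s) :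
    ∑ k ∈ s, (if k = a ∨ k = b then f k else 0) = f a + f b := by
  have h : ∀ k ∈ s, (if k = a ∨ k = b then f k else 0)
      = (if k = a then f k else 0) + (if k = b then f k else 0) := by
    intro k _
    by_cases h1 : k = a <;> by_cases h2 : k = b
    all_goals first
      | omega
      | simp [h1, h2, hab, Ne.symm hab]
  rw [Finset.sum_congr rfl h, Finset.sum_add_distrib,
    sum_ite_eq_single ha, sum_ite_eq_single hb]

lemma sum_ite_or4 {s : Finset ℕ} {f : ℕ → ℕ} {a b c e : ℕ}
    (hab : a ≠ b) (hac : a ≠ c) (hae : a ≠ e) (hbc : b ≠ c) (hbe : b ≠ e) (hce : c ≠ e)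
    (ha : a ∈ s) (hb : b ∈ s) (hc : c ∈ s) (he : e ∈ s) :
    ∑ k ∈ s, (if k = a ∨ k = b ∨ k = c ∨ k = e then f k else 0)
      = f a + f b + f c + f e := by
  have h : ∀ k ∈ s, (if k = a ∨ k = b ∨ k = c ∨ k = e then f k else 0)
      = ((if k = a then f k else 0) + (if k = b then f k else 0))
        + ((if k = c then f k else 0) + (if k = e then f k else 0)) := by
    intro k _
    by_cases h1 : k = a <;> by_cases h2 : k = b <;> by_cases h3 : k = c
      <;> by_cases h4 : k = e
    all_goals first
      | omega
      | simp [h1, h2, h3, h4, hab, hac, hae, hbc, hbe, hce, Ne.symm hab, Ne.symm hac, Ne.symm hae, Ne.symm hbc, Ne.symm hbe, Ne.symm hce]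
  rw [Finset.sum_congr rfl h, Finset.sum_add_distrib, Finset.sum_add_distrib,
    Finset.sum_add_distrib, sum_ite_eq_single ha, sum_ite_eq_single hb,
    sum_ite_eq_single hc, sum_ite_eq_single he]
  ring

/-- inner sum abbreviation -/
def Bsum (n d e : ℕ) : ℕ := ∑ k ∈ n.divisors, (if Nat.lcm e k = d then k.totient else 0)

lemma Bsum_notdvd {n d e : ℕ} (h : ¬ e ∣ d) : Bsum n d e = 0 := by
  apply Finset.sum_eq_zero
  intro k _
  rw [if_neg]
  intro hc
  exact h (hc ▸ Nat.dvd_lcm_left e k)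

lemma Bsum_one {n d : ℕ} (hn : n ≠ 0) (hd : d ∣ n) : Bsum n d 1 = d.totient := by
  unfold Bsum
  have h : ∀ k, Nat.lcm 1 k = k := fun k => Nat.lcm_one_left k
  simp_rw [h]
  exact sum_ite_eq_single (Nat.mem_divisors.mpr ⟨hd, hn⟩)

lemma Bsum_prime_sq {n d r : ℕ} (hn : n ≠ 0) (hd : d ∣ n) (hr : r.Prime)
    (hrd : r ∣ d) (hr2 : r ^ 2 ∣ d) : Bsum n d r = d.totient := by
  unfold Bsum
  have h : ∀ k, (Nat.lcm r k = d) ↔ k = d := by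
    intro k
    rw [lcm_prime_eq hr hrd]
    constructor
    · rintro (rfl | ⟨h2, -⟩)
      · rfl
      · exact absurd hr2 h2
    · exact Or.inl
  simp_rw [h]
  exact sum_ite_eq_single (Nat.mem_divisors.mpr ⟨hd, hn⟩)

lemma Bsum_prime_nsq {n d r d' : ℕ} (hn : n ≠ 0) (hd : d ∣ n) (hr : r.Prime)
    (hr2 : ¬ r ^ 2 ∣ d) (hd' : d = r * d') (hd0 : 0 < d) :
    Bsum n d r = d.totient + d'.totient := by
  unfold Bsum
  have hrd : r ∣ d := ⟨d', hd'⟩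
  have h : ∀ k, (Nat.lcm r k = d) ↔ (k = d ∨ k = d') := by
    intro k
    rw [lcm_prime_eq hr hrd]
    constructor
    · rintro (rfl | ⟨-, hk⟩)
      · exact Or.inl rfl
      · refine Or.inr ?_
        rw [hd'] at hk
        exact Nat.eq_of_mul_eq_mul_left hr.pos hk
    · rintro (rfl | rfl)
      · exact Or.inl rfl
      · exact Or.inr ⟨hr2, hd'.symm⟩
  simp_rw [h]
  have hdd' : d ≠ d' := by
    intro hc
    have : d' ≠ 0 := by rintro rfl; rw [hd', mul_zero] at hd0; omega
    nlinarith [hr.two_le, hd', hc]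
  exact sum_ite_or hdd' (Nat.mem_divisors.mpr ⟨hd, hn⟩)
    (Nat.mem_divisors.mpr ⟨dvd_trans ⟨r, by rw [hd', mul_comm]⟩ hd, hn⟩)

lemma Bsum_pq_22 {n d p q : ℕ} (hn : n ≠ 0) (hd : d ∣ n) (hp : p.Prime) (hq : q.Prime)
    (hpq : p ≠ q) (hpd : p ∣ d) (hqd : q ∣ d) (hp2 : p ^ 2 ∣ d) (hq2 : q ^ 2 ∣ d) :
    Bsum n d (p * q) = d.totient := by
  unfold Bsum
  have h : ∀ k, (Nat.lcm (p * q) k = d) ↔ k = d := by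
    intro k
    rw [lcm_two_primes_eq hp hq hpq hpd hqd]
    constructor
    · rintro (rfl | ⟨h2, -⟩ | ⟨h2, -⟩ | ⟨h2, -, -⟩) <;> first | rfl | exact absurd ‹_› (not_not_intro ‹_›)
    · exact Or.inl
  simp_rw [h]
  exact sum_ite_eq_single (Nat.mem_divisors.mpr ⟨hd, hn⟩)

lemma Bsum_pq_21 {n d p q d₂ : ℕ} (hn : n ≠ 0) (hd : d ∣ n) (hp : p.Prime) (hq : q.Prime)
    (hpq : p ≠ q) (hpd : p ∣ d) (hp2 : p ^ 2 ∣ d) (hq2 : ¬ q ^ 2 ∣ d)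
    (hd₂ : d = q * d₂) (hd0 : 0 < d) :
    Bsum n d (p * q) = d.totient + d₂.totient := by
  unfold Bsum
  have hqd : q ∣ d := ⟨d₂, hd₂⟩
  have h : ∀ k, (Nat.lcm (p * q) k = d) ↔ (k = d ∨ k = d₂) := by
    intro k
    rw [lcm_two_primes_eq hp hq hpq hpd hqd]
    constructor
    · rintro (rfl | ⟨h2, -⟩ | ⟨-, hk⟩ | ⟨h2, -, -⟩)
      · exact Or.inl rfl
      · exact absurd hp2 h2
      · rw [hd₂] at hk
        exact Or.inr (Nat.eq_of_mul_eq_mul_left hq.pos hk)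
      · exact absurd hp2 h2
    · rintro (rfl | rfl)
      · exact Or.inl rfl
      · exact Or.inr (Or.inr (Or.inl ⟨hq2, hd₂.symm⟩))
  simp_rw [h]
  have hdd₂ : d ≠ d₂ := by
    intro hc
    have hm : d₂ ≠ 0 := by rintro rfl; rw [hd₂, mul_zero] at hd0; omega
    nlinarith [hq.two_le, hd₂, hc]
  exact sum_ite_or hdd₂ (Nat.mem_divisors.mpr ⟨hd, hn⟩)
    (Nat.mem_divisors.mpr ⟨dvd_trans ⟨q, by rw [hd₂, mul_comm]⟩ hd, hn⟩)

lemma Bsum_pq_11 {n d p q m : ℕ} (hn : n ≠ 0) (hd : d ∣ n) (hp : p.Prime) (hq : q.Prime)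
    (hpq : p ≠ q) (hp2 : ¬ p ^ 2 ∣ d) (hq2 : ¬ q ^ 2 ∣ d)
    (hm : d = p * (q * m)) (hd0 : 0 < d) :
    Bsum n d (p * q) = d.totient + (q * m).totient + (p * m).totient + m.totient := by
  unfold Bsum
  have hpd : p ∣ d := ⟨q * m, hm⟩
  have hqd : q ∣ d := ⟨p * m, by rw [hm]; ring⟩
  have hm0 : 0 < m := by
    rcases Nat.eq_zero_or_pos m with rfl | h
    · rw [hm, mul_zero, mul_zero] at hd0; omega
    · exact h
  have h : ∀ k, (Nat.lcm (p * q) k = d) ↔ (k = d ∨ k = q * m ∨ k = p * m ∨ k = m) := by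
    intro k
    rw [lcm_two_primes_eq hp hq hpq hpd hqd]
    constructor
    · rintro (rfl | ⟨-, hk⟩ | ⟨-, hk⟩ | ⟨-, -, hk⟩)
      · exact Or.inl rfl
      · rw [hm] at hk
        exact Or.inr (Or.inl (Nat.eq_of_mul_eq_mul_left hp.pos hk))
      · have : q * k = q * (p * m) := by rw [hk, hm]; ring
        exact Or.inr (Or.inr (Or.inl (Nat.eq_of_mul_eq_mul_left hq.pos this)))
      · have : p * (q * k) = p * (q * m) := by rw [hk, hm]
        have := Nat.eq_of_mul_eq_mul_left hp.pos this
        exact Or.inr (Or.inr (Or.inr (Nat.eq_of_mul_eq_mul_left hq.pos this)))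
    · rintro (rfl | rfl | rfl | rfl)
      · exact Or.inl rfl
      · exact Or.inr (Or.inl ⟨hp2, hm.symm⟩)
      · exact Or.inr (Or.inr (Or.inl ⟨hq2, by rw [hm]; ring⟩))
      · exact Or.inr (Or.inr (Or.inr ⟨hp2, hq2, hm.symm⟩))
  simp_rw [h]
  have h2p := hp.two_le
  have h2q := hq.two_le
  have hne1 : d ≠ q * m := by intro hc; nlinarith
  have hne2 : d ≠ p * m := by intro hc; nlinarith
  have hne3 : d ≠ m := by
    intro hc
    have h0 : (p * q) * m = 1 * m := by
      calc (p * q) * m = p * (q * m) := by ring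
        _ = d := hm.symm
        _ = m := hc
        _ = 1 * m := (one_mul m).symm
    have h1 := Nat.eq_one_of_mul_eq_one_right (Nat.eq_of_mul_eq_mul_right hm0 h0)
    omega
  have hne4 : q * m ≠ p * m := by
    intro hc
    exact hpq (Nat.eq_of_mul_eq_mul_right hm0 hc).symm
  have hne5 : q * m ≠ m := by intro hc; nlinarith
  have hne6 : p * m ≠ m := by intro hc; nlinarith
  exact sum_ite_or4 hne1 hne2 hne3 hne4 hne5 hne6
    (Nat.mem_divisors.mpr ⟨hd, hn⟩)
    (Nat.mem_divisors.mpr ⟨dvd_trans ⟨p, by rw [hm]; ring⟩ hd, hn⟩)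
    (Nat.mem_divisors.mpr ⟨dvd_trans ⟨q, by rw [hm]; ring⟩ hd, hn⟩)
    (Nat.mem_divisors.mpr ⟨dvd_trans ⟨p * q, by rw [hm]; ring⟩ hd, hn⟩)

lemma divisors_pq {p q : ℕ} (hp : p.Prime) (hq : q.Prime) (hpq : p ≠ q) :
    (p * q).divisors = {1, p, q, p * q} := by
  have hcop : Nat.Coprime p q := (Nat.coprime_primes hp hq).mpr hpq
  ext e
  rw [Nat.mem_divisors]
  simp only [Finset.mem_insert, Finset.mem_singleton]
  constructor
  · rintro ⟨hdvd, -⟩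
    by_cases hpe : p ∣ e <;> by_cases hqe : q ∣ e
    · right; right; right
      exact Nat.dvd_antisymm hdvd (Nat.Coprime.mul_dvd_of_dvd_of_dvd hcop hpe hqe)
    · right; left
      have hce : Nat.Coprime e q := Nat.Coprime.symm
        ((Nat.Prime.coprime_iff_not_dvd hq).mpr hqe)
      exact Nat.dvd_antisymm (Nat.Coprime.dvd_of_dvd_mul_right hce hdvd) hpe
    · right; right; left
      have hce : Nat.Coprime e p := Nat.Coprime.symm
        ((Nat.Prime.coprime_iff_not_dvd hp).mpr hpe)
      exact Nat.dvd_antisymm (Nat.Coprime.dvd_of_dvd_mul_left hce hdvd) hqe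
    · left
      have hce : Nat.Coprime e p := Nat.Coprime.symm
        ((Nat.Prime.coprime_iff_not_dvd hp).mpr hpe)
      have h1 : e ∣ q := Nat.Coprime.dvd_of_dvd_mul_left hce hdvd
      have hce' : Nat.Coprime e q := Nat.Coprime.symm
        ((Nat.Prime.coprime_iff_not_dvd hq).mpr hqe)
      exact Nat.Coprime.eq_one_of_dvd hce' h1
  · have hne : p * q ≠ 0 := Nat.mul_ne_zero hp.pos.ne' hq.pos.ne'
    rintro (rfl | rfl | rfl | rfl)
    · exact ⟨one_dvd _, hne⟩
    · exact ⟨Dvd.intro q rfl, hne⟩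
    · exact ⟨Dvd.intro_left p rfl, hne⟩
    · exact ⟨dvd_rfl, hne⟩

lemma sum_four_divisors {p q : ℕ} (hp : p.Prime) (hq : q.Prime) (hpq : p ≠ q)
    (f : ℕ → ℕ) :
    ∑ e ∈ (p * q).divisors, f e = f 1 + f p + f q + f (p * q) := by
  rw [divisors_pq hp hq hpq]
  have h2p := hp.two_le
  have h2q := hq.two_le
  have h1 : (1 : ℕ) ∉ ({p, q, p * q} : Finset ℕ) := by
    simp only [Finset.mem_insert, Finset.mem_singleton]
    push_neg
    refine ⟨by omega, by omega, by nlinarith⟩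
  have h2 : p ∉ ({q, p * q} : Finset ℕ) := by
    simp only [Finset.mem_insert, Finset.mem_singleton]
    push_neg
    refine ⟨hpq, by nlinarith⟩
  have h3 : q ∉ ({p * q} : Finset ℕ) := by
    simp only [Finset.mem_singleton]
    nlinarith
  rw [Finset.sum_insert h1, Finset.sum_insert h2, Finset.sum_insert h3,
    Finset.sum_singleton]
  ring
end Aux

/-- For distinct primes `p, q` with `pq ∣ n` and a divisor `d` of `n`, the number of
cyclic subgroups of `Z_{pq} × Z_n` of order `d` in each of the nine cases. -/
theorem num_cyclic_subgroups_Zpq_Zn (p q n : ℕ) (hp : p.Prime) (hq : q.Prime)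
    (hpq : p ≠ q) [NeZero n] (hn : p * q ∣ n) (d : ℕ) (hd : d ∣ n) :
    (Nat.gcd d (p * q) = 1 → numCyclicSubgroups (ZMod (p * q) × ZMod n) d = 1) ∧
    (p ∣ d → ¬ p ^ 2 ∣ d → ¬ q ∣ d →
      numCyclicSubgroups (ZMod (p * q) × ZMod n) d = p + 1) ∧
    (p ^ 2 ∣ d → ¬ q ∣ d → numCyclicSubgroups (ZMod (p * q) × ZMod n) d = p) ∧
    (q ∣ d → ¬ q ^ 2 ∣ d → ¬ p ∣ d →
      numCyclicSubgroups (ZMod (p * q) × ZMod n) d = q + 1) ∧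
    (q ^ 2 ∣ d → ¬ p ∣ d → numCyclicSubgroups (ZMod (p * q) × ZMod n) d = q) ∧
    (p * q ∣ d → ¬ p ^ 2 ∣ d → ¬ q ^ 2 ∣ d →
      numCyclicSubgroups (ZMod (p * q) × ZMod n) d = p * q + p + q + 1) ∧
    (p ^ 2 ∣ d → q ∣ d → ¬ q ^ 2 ∣ d →
      numCyclicSubgroups (ZMod (p * q) × ZMod n) d = p * q + p) ∧
    (q ^ 2 ∣ d → p ∣ d → ¬ p ^ 2 ∣ d →
      numCyclicSubgroups (ZMod (p * q) × ZMod n) d = p * q + q) ∧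
    (p ^ 2 * q ^ 2 ∣ d → numCyclicSubgroups (ZMod (p * q) × ZMod n) d = p * q) := by
  classical
  haveI : NeZero (p * q) := ⟨Nat.mul_ne_zero hp.pos.ne' hq.pos.ne'⟩
  have hn0 : n ≠ 0 := NeZero.ne n
  have hd0 : 0 < d := Nat.pos_of_dvd_of_pos hd (Nat.pos_of_ne_zero hn0)
  have hφpos : 0 < d.totient := Nat.totient_pos.mpr hd0
  have hφp : p.totient = p - 1 := Nat.totient_prime hp
  have hφq : q.totient = q - 1 := Nat.totient_prime hq
  have h2p := hp.two_le
  have h2q := hq.two_le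
  obtain ⟨t, ht⟩ : ∃ t, p = t + 1 := ⟨p - 1, by omega⟩
  obtain ⟨s, hs⟩ : ∃ s, q = s + 1 := ⟨q - 1, by omega⟩
  have key : numCyclicSubgroups (ZMod (p * q) × ZMod n) d * d.totient
      = Bsum n d 1 + p.totient * Bsum n d p + q.totient * Bsum n d q
        + (p.totient * q.totient) * Bsum n d (p * q) := by
    rw [count_key, S_eq, sum_four_divisors hp hq hpq]
    rw [Nat.totient_one, one_mul,
      Nat.totient_mul ((Nat.coprime_primes hp hq).mpr hpq)]
    rfl
  refine ⟨?_, ?_, ?_, ?_, ?_, ?_, ?_, ?_, ?_⟩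
  -- Case 1: gcd(d, pq) = 1
  · intro h
    have hpd : ¬ p ∣ d := by
      intro hc
      have h1 : p ∣ Nat.gcd d (p * q) := Nat.dvd_gcd hc (Dvd.intro q rfl)
      rw [h] at h1
      exact absurd (Nat.dvd_one.mp h1) (by omega)
    have hqd : ¬ q ∣ d := by
      intro hc
      have h1 : q ∣ Nat.gcd d (p * q) := Nat.dvd_gcd hc (Dvd.intro_left p rfl)
      rw [h] at h1
      exact absurd (Nat.dvd_one.mp h1) (by omega)
    have hpqd : ¬ p * q ∣ d := fun hc => hpd ((Dvd.intro q rfl).trans hc)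
    rw [Bsum_notdvd hpd, Bsum_notdvd hqd, Bsum_notdvd hpqd, Bsum_one hn0 hd] at key
    apply Nat.eq_of_mul_eq_mul_right hφpos
    rw [key]; ring
  -- Case 2: p ∣ d, ¬p² ∣ d, ¬q ∣ d
  · intro hpd hp2 hqd
    obtain ⟨d', hd'⟩ := hpd
    have hpqd : ¬ p * q ∣ d := fun hc => hqd ((Dvd.intro_left p rfl).trans hc)
    have hpd' : ¬ p ∣ d' := fun hc => hp2 (by rw [hd', pow_two]; exact mul_dvd_mul_left p hc)
    have hφd : d.totient = p.totient * d'.totient := by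
      rw [hd', Nat.totient_mul ((hp.coprime_iff_not_dvd).mpr hpd')]
    rw [Bsum_one hn0 hd, Bsum_prime_nsq hn0 hd hp hp2 hd' hd0,
      Bsum_notdvd hqd, Bsum_notdvd hpqd] at key
    apply Nat.eq_of_mul_eq_mul_right hφpos
    rw [key, hφd, hφp, hφq, ht, hs]
    simp only [Nat.add_sub_cancel]
    ring
  -- Case 3: p² ∣ d, ¬q ∣ d
  · intro hp2 hqd
    have hpd : p ∣ d := (dvd_pow_self p two_ne_zero).trans hp2
    have hpqd : ¬ p * q ∣ d := fun hc => hqd ((Dvd.intro_left p rfl).trans hc)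
    rw [Bsum_one hn0 hd, Bsum_prime_sq hn0 hd hp hpd hp2,
      Bsum_notdvd hqd, Bsum_notdvd hpqd] at key
    apply Nat.eq_of_mul_eq_mul_right hφpos
    rw [key, hφp, hφq, ht, hs]
    simp only [Nat.add_sub_cancel]
    ring
  -- Case 4: q ∣ d, ¬q² ∣ d, ¬p ∣ d
  · intro hqd hq2 hpd
    obtain ⟨d', hd'⟩ := hqd
    have hpqd : ¬ p * q ∣ d := fun hc => hpd ((Dvd.intro q rfl).trans hc)
    have hqd' : ¬ q ∣ d' := fun hc => hq2 (by rw [hd', pow_two]; exact mul_dvd_mul_left q hc)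
    have hφd : d.totient = q.totient * d'.totient := by
      rw [hd', Nat.totient_mul ((hq.coprime_iff_not_dvd).mpr hqd')]
    rw [Bsum_one hn0 hd, Bsum_prime_nsq hn0 hd hq hq2 hd' hd0,
      Bsum_notdvd hpd, Bsum_notdvd hpqd] at key
    apply Nat.eq_of_mul_eq_mul_right hφpos
    rw [key, hφd, hφp, hφq, ht, hs]
    simp only [Nat.add_sub_cancel]
    ring
  -- Case 5: q² ∣ d, ¬p ∣ d
  · intro hq2 hpd
    have hqd : q ∣ d := (dvd_pow_self q two_ne_zero).trans hq2
    have hpqd : ¬ p * q ∣ d := fun hc => hpd ((Dvd.intro q rfl).trans hc)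
    rw [Bsum_one hn0 hd, Bsum_prime_sq hn0 hd hq hqd hq2,
      Bsum_notdvd hpd, Bsum_notdvd hpqd] at key
    apply Nat.eq_of_mul_eq_mul_right hφpos
    rw [key, hφp, hφq, ht, hs]
    simp only [Nat.add_sub_cancel]
    ring
  -- Case 6: pq ∣ d, ¬p² ∣ d, ¬q² ∣ d
  · intro hpqd hp2 hq2
    obtain ⟨m, hm⟩ := hpqd
    have hm' : d = p * (q * m) := by rw [hm]; ring
    have hm'' : d = q * (p * m) := by rw [hm]; ring
    have hpm : ¬ p ∣ q * m := by
      intro hc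
      have : p ∣ m := (Nat.Coprime.dvd_of_dvd_mul_left
        ((Nat.coprime_primes hp hq).mpr hpq) hc)
      exact hp2 (by rw [hm', pow_two]; exact mul_dvd_mul_left p (this.mul_left q))
    have hqm : ¬ q ∣ m := by
      intro hc
      exact hq2 (by rw [hm'', pow_two]; exact mul_dvd_mul_left q (hc.mul_left p))
    have hpm' : ¬ p ∣ m := fun hc => hpm (hc.mul_left q)
    have hφd : d.totient = p.totient * (q * m).totient := by
      rw [hm', Nat.totient_mul ((hp.coprime_iff_not_dvd).mpr hpm)]
    have hφqm : (q * m).totient = q.totient * m.totient := by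
      rw [Nat.totient_mul ((hq.coprime_iff_not_dvd).mpr hqm)]
    have hφpm : (p * m).totient = p.totient * m.totient := by
      rw [Nat.totient_mul ((hp.coprime_iff_not_dvd).mpr hpm')]
    rw [Bsum_one hn0 hd, Bsum_prime_nsq hn0 hd hp hp2 hm' hd0,
      Bsum_prime_nsq hn0 hd hq hq2 hm'' hd0,
      Bsum_pq_11 hn0 hd hp hq hpq hp2 hq2 hm' hd0] at key
    apply Nat.eq_of_mul_eq_mul_right hφpos
    rw [key, hφd, hφqm, hφpm, hφp, hφq, ht, hs]
    simp only [Nat.add_sub_cancel]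
    ring
  -- Case 7: p² ∣ d, q ∣ d, ¬q² ∣ d
  · intro hp2 hqd hq2
    have hpd : p ∣ d := (dvd_pow_self p two_ne_zero).trans hp2
    obtain ⟨d₂, hd₂⟩ := hqd
    have hqd₂ : ¬ q ∣ d₂ := fun hc => hq2 (by rw [hd₂, pow_two]; exact mul_dvd_mul_left q hc)
    have hφd : d.totient = q.totient * d₂.totient := by
      rw [hd₂, Nat.totient_mul ((hq.coprime_iff_not_dvd).mpr hqd₂)]
    rw [Bsum_one hn0 hd, Bsum_prime_sq hn0 hd hp hpd hp2,
      Bsum_prime_nsq hn0 hd hq hq2 hd₂ hd0,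
      Bsum_pq_21 hn0 hd hp hq hpq hpd hp2 hq2 hd₂ hd0] at key
    apply Nat.eq_of_mul_eq_mul_right hφpos
    rw [key, hφd, hφp, hφq, ht, hs]
    simp only [Nat.add_sub_cancel]
    ring
  -- Case 8: q² ∣ d, p ∣ d, ¬p² ∣ d
  · intro hq2 hpd hp2
    have hqd : q ∣ d := (dvd_pow_self q two_ne_zero).trans hq2
    obtain ⟨d₁, hd₁⟩ := hpd
    have hpd₁ : ¬ p ∣ d₁ := fun hc => hp2 (by rw [hd₁, pow_two]; exact mul_dvd_mul_left p hc)
    have hφd : d.totient = p.totient * d₁.totient := by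
      rw [hd₁, Nat.totient_mul ((hp.coprime_iff_not_dvd).mpr hpd₁)]
    have hcomm : Bsum n d (p * q) = Bsum n d (q * p) := by rw [mul_comm]
    rw [Bsum_one hn0 hd, Bsum_prime_nsq hn0 hd hp hp2 hd₁ hd0,
      Bsum_prime_sq hn0 hd hq hqd hq2, hcomm,
      Bsum_pq_21 hn0 hd hq hp (Ne.symm hpq) hqd hq2 hp2 hd₁ hd0] at key
    apply Nat.eq_of_mul_eq_mul_right hφpos
    rw [key, hφd, hφp, hφq, ht, hs]
    simp only [Nat.add_sub_cancel]
    ring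
  -- Case 9: p²q² ∣ d
  · intro h
    have hp2 : p ^ 2 ∣ d := (dvd_mul_right _ _).trans h
    have hq2 : q ^ 2 ∣ d := (dvd_mul_left _ _).trans h
    have hpd : p ∣ d := (dvd_pow_self p two_ne_zero).trans hp2
    have hqd : q ∣ d := (dvd_pow_self q two_ne_zero).trans hq2
    rw [Bsum_one hn0 hd, Bsum_prime_sq hn0 hd hp hpd hp2,
      Bsum_prime_sq hn0 hd hq hqd hq2,
      Bsum_pq_22 hn0 hd hp hq hpq hpd hqd hp2 hq2] at key
    apply Nat.eq_of_mul_eq_mul_right hφpos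
    rw [key, hφp, hφq, ht, hs]
    simp only [Nat.add_sub_cancel]
    ring
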